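/- There exists a constant C > 0 such that for every player-specific congestion game on a circle with n players in which all players are of type 3 (or all are of type 3'), and for every initial state, the expected number of steps until the random best response dynamics reaches a Nash equilibrium is at most C·n^2. -/

import Mathlib

open scoped ENNReal NNReal

/-- A player-specific singleton congestion game on a circle with `n` players:
the resources are `0, …, n-1`, and player `i` chooses between resource `i`
(its 0-strategy, with delay function `d0 i`) and resource `i+1 (mod n)`
(its 1-strategy, with delay function `d1 i`). The delay functions are strictly
increasing and ties are broken (for each player the delays of its two resources
at congestions `1 ≤ k ≤ n` are pairwise distinct). -/
structure CircleGame (n : ℕ) where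
  d0 : Fin n → ℕ → ℕ
  d1 : Fin n → ℕ → ℕ
  mono0 : ∀ i, StrictMono (d0 i)
  mono1 : ∀ i, StrictMono (d1 i)
  tie : ∀ i : Fin n, ∀ k, 1 ≤ k → k ≤ n → ∀ k', 1 ≤ k' → k' ≤ n → d0 i k ≠ d1 i k'

namespace CircleGame

variable {n : ℕ} [NeZero n]

/-- A state is a function `s : Fin n → Bool`: `s i = false` iff player `i` plays its
0-strategy (resource `i`), and `s i = true` iff it plays its 1-strategy (resource `i+1`).
`cong s r` is the congestion of resource `r`: resource `r` is allocated by player `r`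
(if it plays its 0-strategy) and by player `r-1` (if it plays its 1-strategy). -/
def cong (s : Fin n → Bool) (r : Fin n) : ℕ :=
  (if s r = false then 1 else 0) + (if s (r - 1) = true then 1 else 0)

/-- The current resource of player `i` is a best response to state `s`. -/
def CurrentBR (G : CircleGame n) (s : Fin n → Bool) (i : Fin n) : Prop :=
  if s i = false then G.d0 i (cong s i) ≤ G.d1 i (cong s (i + 1) + 1)
  else G.d1 i (cong s (i + 1)) ≤ G.d0 i (cong s i + 1)

/-- One best-response step: a player whose current resource is not a best response
switches to its (unique) other resource, which is then its best response. -/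
def Step (G : CircleGame n) (s s' : Fin n → Bool) : Prop :=
  ∃ i, ¬ G.CurrentBR s i ∧ s' = Function.update s i (!(s i))

/-- Nash equilibrium: every player's current resource is a best response. -/
def IsNash (G : CircleGame n) (s : Fin n → Bool) : Prop := ∀ i, G.CurrentBR s i

/-- type 1 : `d_{r_i}(1) < d_{r_i}(2) < d_{r_{i+1}}(1) < d_{r_{i+1}}(2)`. -/
def IsType1 (G : CircleGame n) (i : Fin n) : Prop :=
  G.d0 i 1 < G.d0 i 2 ∧ G.d0 i 2 < G.d1 i 1 ∧ G.d1 i 1 < G.d1 i 2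

/-- type 1' : roles of the two resources exchanged. -/
def IsType1' (G : CircleGame n) (i : Fin n) : Prop :=
  G.d1 i 1 < G.d1 i 2 ∧ G.d1 i 2 < G.d0 i 1 ∧ G.d0 i 1 < G.d0 i 2

/-- type 2 : `d_{r_i}(1) < d_{r_{i+1}}(1) < d_{r_i}(2) < d_{r_{i+1}}(2)`. -/
def IsType2 (G : CircleGame n) (i : Fin n) : Prop :=
  G.d0 i 1 < G.d1 i 1 ∧ G.d1 i 1 < G.d0 i 2 ∧ G.d0 i 2 < G.d1 i 2

/-- type 2' : roles of the two resources exchanged. -/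
def IsType2' (G : CircleGame n) (i : Fin n) : Prop :=
  G.d1 i 1 < G.d0 i 1 ∧ G.d0 i 1 < G.d1 i 2 ∧ G.d1 i 2 < G.d0 i 2

/-- type 3 : `d_{r_i}(1) < d_{r_{i+1}}(1) < d_{r_{i+1}}(2) < d_{r_i}(2)`. -/
def IsType3 (G : CircleGame n) (i : Fin n) : Prop :=
  G.d0 i 1 < G.d1 i 1 ∧ G.d1 i 1 < G.d1 i 2 ∧ G.d1 i 2 < G.d0 i 2

/-- type 3' : roles of the two resources exchanged. -/
def IsType3' (G : CircleGame n) (i : Fin n) : Prop :=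
  G.d1 i 1 < G.d0 i 1 ∧ G.d0 i 1 < G.d0 i 2 ∧ G.d0 i 2 < G.d1 i 2

/-- Resource `r_i` is a termination point for overload tokens: the pair of types of
players `i-1` and `i` is one of `(2',2), (3,3'), (3,2), (2',3')`. -/
def OverloadTP (G : CircleGame n) (i : Fin n) : Prop :=
  (G.IsType2' (i - 1) ∧ G.IsType2 i) ∨ (G.IsType3 (i - 1) ∧ G.IsType3' i) ∨
  (G.IsType3 (i - 1) ∧ G.IsType2 i) ∨ (G.IsType2' (i - 1) ∧ G.IsType3' i)

/-- Resource `r_i` is a termination point for underload tokens: the pair of types of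
players `i-1` and `i` is one of `(2,2'), (3,3'), (2,3'), (3,2')`. -/
def UnderloadTP (G : CircleGame n) (i : Fin n) : Prop :=
  (G.IsType2 (i - 1) ∧ G.IsType2' i) ∨ (G.IsType3 (i - 1) ∧ G.IsType3' i) ∨
  (G.IsType2 (i - 1) ∧ G.IsType3' i) ∨ (G.IsType3 (i - 1) ∧ G.IsType2' i)

open scoped Classical in
/-- The set of players whose current resource is not a best response. -/
noncomputable def unsat (G : CircleGame n) (s : Fin n → Bool) : Finset (Fin n) :=
  Finset.univ.filter fun i => ¬ G.CurrentBR s i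

/-- One step of the random best response dynamics: in a state that is not a Nash
equilibrium, a player whose current resource is not a best response is selected
uniformly at random and switches to its best response; Nash equilibria are absorbing. -/
noncomputable def stepPMF (G : CircleGame n) (s : Fin n → Bool) : PMF (Fin n → Bool) :=
  if h : (G.unsat s).Nonempty then
    (PMF.uniformOfFinset (G.unsat s) h).bind fun i => PMF.pure (Function.update s i (!(s i)))
  else PMF.pure s

/-- The distribution of the random best response dynamics after `t` steps, started in `s`. -/
noncomputable def walk (G : CircleGame n) (s : Fin n → Bool) : ℕ → PMF (Fin n → Bool)
  | 0 => PMF.pure s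
  | t + 1 => (walk G s t).bind G.stepPMF

open scoped Classical in
/-- The expected number of steps until the random best response dynamics started in `s`
reaches a Nash equilibrium: since Nash equilibria are absorbing, this is
`∑_{t ≥ 0} Pr[X_t is not a Nash equilibrium]`. -/
noncomputable def expTime (G : CircleGame n) (s : Fin n → Bool) : ℝ≥0∞ :=
  ∑' t : ℕ, ∑ s' ∈ Finset.univ.filter (fun s' => ¬ G.IsNash s'), G.walk s t s'

end CircleGame


open scoped ENNReal NNReal Classical
open Finset Function

namespace CGProof

/-- A cyclic shift structure on `Fin n`: `ρ` is the forward step, `τ` its inverse,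
and `dd j i` is the number of forward steps from `j` to `i`. -/
structure Cyc (n : ℕ) where
  ρ : Fin n → Fin n
  τ : Fin n → Fin n
  hτρ : ∀ j, τ (ρ j) = j
  hρτ : ∀ j, ρ (τ j) = j
  dd : Fin n → Fin n → ℕ
  hdlt : ∀ j i, dd j i < n
  hdit : ∀ j i, ρ^[dd j i] j = i
  hdun : ∀ j i t, t < n → ρ^[t] j = i → t = dd j i

namespace Cyc

variable {n : ℕ} [NeZero n] (K : Cyc n)

lemma it_tau_rho (t : ℕ) (x : Fin n) : K.τ^[t] (K.ρ^[t] x) = x :=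
  (Function.LeftInverse.iterate K.hτρ t) x

lemma it_rho_tau (t : ℕ) (x : Fin n) : K.ρ^[t] (K.τ^[t] x) = x :=
  (Function.LeftInverse.iterate K.hρτ t) x

lemma rho_it_inj (t : ℕ) : Function.Injective (K.ρ^[t]) :=
  Function.LeftInverse.injective (g := K.τ^[t]) (fun x => K.it_tau_rho t x)

lemma rho_tau_sub {a b : ℕ} (h : a ≤ b) (x : Fin n) :
    K.ρ^[a] (K.τ^[b] x) = K.τ^[b - a] x := by
  have : K.τ^[b] x = K.τ^[a] (K.τ^[b - a] x) := by
    rw [← Function.iterate_add_apply, Nat.add_sub_cancel' h]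
  rw [this, it_rho_tau]

lemma dd_self (j : Fin n) : K.dd j j = 0 :=
  (K.hdun j j 0 (Nat.pos_of_ne_zero (NeZero.ne n)) rfl).symm

lemma dd_pos {j i : Fin n} (h : j ≠ i) : 0 < K.dd j i := by
  rcases Nat.eq_zero_or_pos (K.dd j i) with h0 | h1
  · exfalso; apply h; have := K.hdit j i; rwa [h0] at this
  · exact h1

lemma dd_tau {j i : Fin n} (h : j ≠ i) : K.dd j (K.τ i) = K.dd j i - 1 := by
  have hm := K.dd_pos h
  set m := K.dd j i with hmdef
  have h1 : K.ρ^[m] j = i := K.hdit j i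
  have h2 : K.ρ (K.ρ^[m - 1] j) = i := by
    have hmm : m - 1 + 1 = m := by omega
    have h2' : K.ρ^[m - 1 + 1] j = i := by rwa [hmm]
    rwa [Function.iterate_succ_apply'] at h2'
  have h3 : K.ρ^[m - 1] j = K.τ i := by rw [← h2, K.hτρ]
  exact (K.hdun j (K.τ i) (m - 1) (lt_of_le_of_lt (Nat.pred_le m) (K.hdlt j i)) h3).symm

lemma tau_of_dd {j i : Fin n} : K.τ^[K.dd j i] i = j := by
  have h := K.it_tau_rho (K.dd j i) j
  rwa [K.hdit] at h

lemma rho_n (j : Fin n) : K.ρ^[n] j = j := by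
  set t := K.dd j (K.ρ^[n] j) with ht
  have h1 : K.ρ^[t] j = K.ρ^[n] j := K.hdit _ _
  have htn : t < n := K.hdlt _ _
  have h2 : K.ρ^[t] (K.ρ^[n - t] j) = K.ρ^[t] j := by
    rw [← Function.iterate_add_apply, Nat.add_sub_cancel' (le_of_lt htn), h1]
  have h3 : K.ρ^[n - t] j = j := K.rho_it_inj t h2
  rcases Nat.eq_zero_or_pos t with h0 | hpos
  · rw [h0] at h1; simpa using h1.symm
  · have hlt : n - t < n := by omega
    have he := K.hdun j j (n - t) hlt h3
    rw [K.dd_self] at he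
    exfalso; omega

/-- The set of `j'` at forward distance ≤ m from `j` has exactly `m+1` elements. -/
lemma card_ball (j : Fin n) {m : ℕ} (hm : m < n) :
    (univ.filter fun j' => K.dd j j' ≤ m).card = m + 1 := by
  have himg : (univ.filter fun j' => K.dd j j' ≤ m) =
      (Finset.range (m + 1)).image (fun t => K.ρ^[t] j) := by
    ext j'
    simp only [mem_filter, mem_univ, true_and, mem_image, mem_range]
    constructor
    · intro h; exact ⟨K.dd j j', by omega, K.hdit j j'⟩
    · rintro ⟨t, ht, rfl⟩
      have := K.hdun j _ t (by omega) rfl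
      omega
  rw [himg, Finset.card_image_of_injOn, Finset.card_range]
  intro t₁ h₁ t₂ h₂ he
  simp only [mem_coe, mem_range] at h₁ h₂
  dsimp only at he
  have e1 : t₁ = K.dd j (K.ρ^[t₁] j) := K.hdun j _ t₁ (by omega) rfl
  have e2 : t₂ = K.dd j (K.ρ^[t₁] j) := K.hdun j _ t₂ (by omega) he.symm
  omega


section Potential

variable (s : Fin n → Bool)

/-- `CC s j j'` : `s` is constant on the forward path from `j` to `j'`. -/
def CC (j j' : Fin n) : Prop := ∀ t ≤ K.dd j j', s (K.ρ^[t] j) = s j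

/-- number of `j'` such that `s` is constant on the path from `j` to `j'`. -/
noncomputable def rr (j : Fin n) : ℕ := (univ.filter fun j' => K.CC s j j').card

/-- The potential of a state. -/
noncomputable def pot : ℕ := ∑ j, K.rr s j

/-- The set of "boundaries". -/
noncomputable def bnd : Finset (Fin n) := univ.filter fun i => s i ≠ s (K.τ i)

/-- The "gap" preceding boundary `i`. -/
noncomputable def GS (i : Fin n) : Finset (Fin n) :=
  univ.filter fun j => j ≠ i ∧ K.CC s j (K.τ i)

variable {s}

lemma mem_bnd {i : Fin n} : i ∈ K.bnd s ↔ s i ≠ s (K.τ i) := by simp [bnd]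

lemma rr_le (j : Fin n) : K.rr s j ≤ n := by
  have := Finset.card_filter_le (univ : Finset (Fin n)) (fun j' => K.CC s j j')
  simpa [rr] using this

lemma pot_le : K.pot s ≤ n * n := by
  calc K.pot s ≤ ∑ _j : Fin n, n := Finset.sum_le_sum (fun j _ => K.rr_le j)
  _ = n * n := by simp [mul_comm]

lemma cc_self (j : Fin n) : K.CC s j j := by
  intro t ht
  rw [K.dd_self] at ht
  interval_cases t
  rfl

lemma rr_pos (j : Fin n) : 1 ≤ K.rr s j := by
  have hj : j ∈ univ.filter fun j' => K.CC s j j' := by simp [K.cc_self]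
  unfold rr
  exact Finset.card_pos.mpr ⟨j, hj⟩

lemma cc_down {j j₁ j₂ : Fin n} (h : K.CC s j j₁) (hle : K.dd j j₂ ≤ K.dd j j₁) :
    K.CC s j j₂ := fun t ht => h t (le_trans ht hle)

lemma bool_flip {i : Fin n} (hi : i ∈ K.bnd s) : (!(s i)) = s (K.τ i) := by
  have := K.mem_bnd.mp hi
  revert this; cases s i <;> cases s (K.τ i) <;> simp

/-- counted windows from `j ≠ i` stop strictly before the boundary `i`. -/
lemma cc_lt_of_bnd {i j j' : Fin n} (hi : i ∈ K.bnd s) (hji : j ≠ i)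
    (hC : K.CC s j j') : K.dd j j' < K.dd j i := by
  by_contra h'
  push_neg at h'
  have hm := K.dd_pos hji
  have e1 : s (K.ρ^[K.dd j i] j) = s j := hC _ h'
  have e2 : s (K.ρ^[K.dd j i - 1] j) = s j := hC _ (by omega)
  rw [K.hdit] at e1
  have h3 : K.ρ^[K.dd j i - 1] j = K.τ i := by
    have := K.hdit j (K.τ i)
    rwa [K.dd_tau hji] at this
  rw [h3] at e2
  exact (K.mem_bnd.mp hi) (e1.trans e2.symm)

lemma rr_le_dd {i j : Fin n} (hi : i ∈ K.bnd s) (hji : j ≠ i) :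
    K.rr s j ≤ K.dd j i := by
  have hm := K.dd_pos hji
  have hsub : (univ.filter fun j' => K.CC s j j') ⊆
      (univ.filter fun j' => K.dd j j' ≤ K.dd j i - 1) := by
    intro j' hj'
    simp only [mem_filter, mem_univ, true_and] at hj' ⊢
    have := K.cc_lt_of_bnd hi hji hj'
    omega
  have := Finset.card_le_card hsub
  rw [K.card_ball j (by have := K.hdlt j i; omega)] at this
  unfold rr
  omega

/-- flipping the boundary `i` preserves counted windows of other players. -/
lemma cc_update {i j j' : Fin n} (hi : i ∈ K.bnd s) (hji : j ≠ i)
    (hC : K.CC s j j') : K.CC (Function.update s i (!(s i))) j j' := by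
  have hlt := K.cc_lt_of_bnd hi hji hC
  have hstep : ∀ t ≤ K.dd j j', K.ρ^[t] j ≠ i := by
    intro t ht he
    have : t = K.dd j i := K.hdun j i t (by have := K.hdlt j j'; omega) he
    omega
  intro t ht
  rw [Function.update_of_ne (hstep t ht), Function.update_of_ne hji]
  exact hC t ht

lemma rr_update_mono {i j : Fin n} (hi : i ∈ K.bnd s) (hji : j ≠ i) :
    K.rr s j ≤ K.rr (Function.update s i (!(s i))) j := by
  apply Finset.card_le_card
  intro j' hj'
  simp only [rr, mem_filter, mem_univ, true_and] at hj' ⊢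
  exact K.cc_update hi hji hj'

lemma rr_update_gain {i j : Fin n} (hi : i ∈ K.bnd s) (hj : j ∈ K.GS s i) :
    K.dd j i + 1 ≤ K.rr (Function.update s i (!(s i))) j := by
  simp only [GS, mem_filter, mem_univ, true_and] at hj
  obtain ⟨hji, hC⟩ := hj
  have hm := K.dd_pos hji
  have hdτ : K.dd j (K.τ i) = K.dd j i - 1 := K.dd_tau hji
  set s' := Function.update s i (!(s i)) with hs'
  have hCi : K.CC s' j i := by
    intro t ht
    have hsj : s' j = s j := Function.update_of_ne hji _ _
    rcases Nat.lt_or_ge t (K.dd j i) with hlt | hge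
    · have hne : K.ρ^[t] j ≠ i := by
        intro he
        have : t = K.dd j i := K.hdun j i t (by have := K.hdlt j i; omega) he
        omega
      have hj' : s' (K.ρ^[t] j) = s (K.ρ^[t] j) := Function.update_of_ne hne _ _
      rw [hj', hsj]
      exact hC t (by omega)
    · have hteq : t = K.dd j i := by omega
      have hρ : K.ρ^[t] j = i := by rw [hteq]; exact K.hdit j i
      have h4 : s' i = !(s i) := Function.update_self _ _ _
      rw [hρ, h4, hsj, K.bool_flip hi]
      have h3 : K.ρ^[K.dd j i - 1] j = K.τ i := by
        have := K.hdit j (K.τ i)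
        rwa [hdτ] at this
      have h5 := hC (K.dd j i - 1) (by omega)
      rw [h3] at h5
      exact h5
  have hsub : (univ.filter fun j' => K.dd j j' ≤ K.dd j i) ⊆
      (univ.filter fun j' => K.CC s' j j') := by
    intro j' hj'
    simp only [mem_filter, mem_univ, true_and] at hj' ⊢
    exact K.cc_down hCi hj'
  have hcard := Finset.card_le_card hsub
  rw [K.card_ball j (K.hdlt j i)] at hcard
  unfold rr
  omega

/-- Per-move potential inequality. -/
lemma pot_update {i : Fin n} (hi : i ∈ K.bnd s) :
    K.pot s + (K.GS s i).card + 1 ≤ K.pot (Function.update s i (!(s i))) + K.rr s i := by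
  set s' := Function.update s i (!(s i)) with hs'
  have hsplit : K.pot s = K.rr s i + ∑ j ∈ univ.erase i, K.rr s j := by
    rw [pot, ← Finset.add_sum_erase _ _ (mem_univ i)]
  have hsplit' : K.pot s' = K.rr s' i + ∑ j ∈ univ.erase i, K.rr s' j := by
    rw [pot, ← Finset.add_sum_erase _ _ (mem_univ i)]
  have hGsub : K.GS s i ⊆ univ.erase i := by
    intro j hj
    simp only [GS, mem_filter, mem_univ, true_and] at hj
    simp [hj.1]
  have hterm : ∀ j ∈ univ.erase i,
      K.rr s j + (if j ∈ K.GS s i then 1 else 0) ≤ K.rr s' j := by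
    intro j hj
    have hji : j ≠ i := by simpa using (Finset.mem_erase.mp hj).1
    by_cases hG : j ∈ K.GS s i
    · simp only [hG, if_true]
      have h1 := K.rr_le_dd hi hji
      have h2 := K.rr_update_gain hi hG
      rw [← hs'] at h2
      omega
    · simp only [hG, if_false, add_zero]
      exact K.rr_update_mono hi hji
  have hsum := Finset.sum_le_sum hterm
  rw [Finset.sum_add_distrib] at hsum
  have hcard : ∑ j ∈ univ.erase i, (if j ∈ K.GS s i then 1 else 0) = (K.GS s i).card := by
    rw [Finset.sum_ite_mem, Finset.inter_eq_right.mpr hGsub]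
    simp
  rw [hcard] at hsum
  have hpos := K.rr_pos (s := s') i
  omega

/-- constancy along runs with no boundary. -/
lemma run_const {j : Fin n} {t : ℕ}
    (hnb : ∀ u, 1 ≤ u → u ≤ t → K.ρ^[u] j ∉ K.bnd s) :
    ∀ u ≤ t, s (K.ρ^[u] j) = s j := by
  intro u
  induction u with
  | zero => intro _; rfl
  | succ v ih =>
    intro hv
    have h1 : s (K.ρ^[v+1] j) = s (K.τ (K.ρ^[v+1] j)) := by
      have := hnb (v+1) (by omega) hv
      rw [K.mem_bnd] at this
      push_neg at this
      exact this
    have h2 : K.τ (K.ρ^[v+1] j) = K.ρ^[v] j := by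
      rw [Function.iterate_succ_apply', K.hτρ]
    rw [h1, h2]
    exact ih (by omega)

/-- uniqueness helper for `sum_rr`. -/
lemma last_unique_aux {j' i₁ i₂ : Fin n} (h1 : i₁ ∈ K.bnd s)
    (hC2 : K.CC s i₂ j') (hlt : K.dd i₁ j' < K.dd i₂ j') : False := by
  set t₁ := K.dd i₁ j' with ht₁
  set t₂ := K.dd i₂ j' with ht₂
  have hkey : K.ρ^[t₂ - t₁] i₂ = i₁ := by
    apply K.rho_it_inj t₁
    rw [← Function.iterate_add_apply, Nat.add_sub_cancel' (le_of_lt hlt)]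
    rw [K.hdit, K.hdit]
  have e1 : s i₁ = s i₂ := by
    have := hC2 (t₂ - t₁) (by omega)
    rwa [hkey] at this
  have e2 : s (K.τ i₁) = s i₂ := by
    have h3 : K.ρ^[t₂ - t₁ - 1] i₂ = K.τ i₁ := by
      have h4 : K.ρ (K.ρ^[t₂ - t₁ - 1] i₂) = i₁ := by
        have h5 : t₂ - t₁ - 1 + 1 = t₂ - t₁ := by omega
        have h6 := Function.iterate_succ_apply' K.ρ (t₂ - t₁ - 1) i₂
        rw [← h6, Nat.succ_eq_add_one, h5]
        exact hkey
      rw [← h4, K.hτρ]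
    have := hC2 (t₂ - t₁ - 1) (by omega)
    rwa [h3] at this
  exact (K.mem_bnd.mp h1) (e1.trans e2.symm)

/-- every position has a unique "last boundary at or before it". -/
lemma exists_unique_last (hne : (K.bnd s).Nonempty) (j' : Fin n) :
    ∃! i, i ∈ K.bnd s ∧ K.CC s i j' := by
  obtain ⟨b, hb⟩ := hne
  have hPex : ∃ t, K.τ^[t] j' ∈ K.bnd s := ⟨K.dd b j', by rw [K.tau_of_dd]; exact hb⟩
  set t₀ := Nat.find hPex with ht₀def
  have ht₀ : K.τ^[t₀] j' ∈ K.bnd s := Nat.find_spec hPex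
  have hmin : ∀ u, u < t₀ → K.τ^[u] j' ∉ K.bnd s := fun u hu => Nat.find_min hPex hu
  set i := K.τ^[t₀] j' with hidef
  have hri : K.ρ^[t₀] i = j' := K.it_rho_tau t₀ j'
  have ht₀n : t₀ < n := by
    have h1 : t₀ ≤ K.dd b j' := Nat.find_min' hPex (by rw [K.tau_of_dd]; exact hb)
    have := K.hdlt b j'
    omega
  have hdd : K.dd i j' = t₀ := (K.hdun i j' t₀ ht₀n hri).symm
  have hCi : K.CC s i j' := by
    intro u hu
    rw [hdd] at hu
    refine K.run_const (t := t₀) ?_ u hu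
    intro v hv1 hv2
    have h6 : K.ρ^[v] i = K.τ^[t₀ - v] j' := K.rho_tau_sub hv2 j'
    rw [h6]
    exact hmin (t₀ - v) (by omega)
  refine ⟨i, ⟨ht₀, hCi⟩, ?_⟩
  rintro i' ⟨hi', hCi'⟩
  rcases lt_trichotomy (K.dd i' j') (K.dd i j') with h | h | h
  · exact absurd (K.last_unique_aux hi' hCi h) id
  · have e1 : K.τ^[K.dd i' j'] j' = i' := K.tau_of_dd
    rw [h, hdd] at e1
    exact e1.symm ▸ rfl
  · exact absurd (K.last_unique_aux ht₀ hCi' h) id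

/-- uniqueness helper for `sum_gs`. -/
lemma next_unique_aux {j i₁ i₂ : Fin n} (h1 : i₁ ∈ K.bnd s) (hj1 : j ≠ i₁)
    (hC2 : K.CC s j (K.τ i₂)) (hj2 : j ≠ i₂)
    (hlt : K.dd j i₁ < K.dd j i₂) : False := by
  have hm1 := K.dd_pos hj1
  have hd2 : K.dd j (K.τ i₂) = K.dd j i₂ - 1 := K.dd_tau hj2
  have e1 : s i₁ = s j := by
    have := hC2 (K.dd j i₁) (by omega)
    rwa [K.hdit] at this
  have e2 : s (K.τ i₁) = s j := by
    have h3 : K.ρ^[K.dd j i₁ - 1] j = K.τ i₁ := by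
      have := K.hdit j (K.τ i₁)
      rwa [K.dd_tau hj1] at this
    have := hC2 (K.dd j i₁ - 1) (by omega)
    rwa [h3] at this
  exact (K.mem_bnd.mp h1) (e1.trans e2.symm)

/-- every position has a unique "next boundary strictly after it". -/
lemma exists_unique_next (hne : (K.bnd s).Nonempty) (j : Fin n) :
    ∃! i, i ∈ K.bnd s ∧ (j ≠ i ∧ K.CC s j (K.τ i)) := by
  obtain ⟨b, hb⟩ := hne
  have hPex : ∃ t, K.ρ^[t+1] j ∈ K.bnd s := by
    refine ⟨K.dd (K.ρ j) b, ?_⟩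
    rw [Function.iterate_succ_apply, K.hdit]
    exact hb
  set t₀ := Nat.find hPex with ht₀def
  have ht₀ : K.ρ^[t₀+1] j ∈ K.bnd s := Nat.find_spec hPex
  have hmin : ∀ u, u < t₀ → K.ρ^[u+1] j ∉ K.bnd s := fun u hu => Nat.find_min hPex hu
  have hnb : ∀ v, 1 ≤ v → v ≤ t₀ → K.ρ^[v] j ∉ K.bnd s := by
    intro v hv1 hv2
    have h7 : v - 1 + 1 = v := by omega
    have := hmin (v - 1) (by omega)
    rwa [h7] at this
  have ht₀n : t₀ + 1 < n := by
    by_contra hge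
    push_neg at hge
    have hconst : ∀ u ≤ n - 1, s (K.ρ^[u] j) = s j :=
      K.run_const (fun v hv1 hv2 => hnb v hv1 (by omega))
    set i' := K.ρ^[t₀+1] j with hi'def
    set m := K.dd j i' with hmdef
    have hmi : K.ρ^[m] j = i' := K.hdit j i'
    have hmn : m < n := K.hdlt j i'
    rcases Nat.eq_zero_or_pos m with h0 | hpos
    · -- i' = j, so j ∈ bnd, yet s is constant on the whole cycle
      have hij : i' = j := by rw [← hmi, h0]; rfl
      have hτj : K.τ j = K.ρ^[n-1] j := by
        have h8 : K.ρ (K.ρ^[n-1] j) = j := by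
          have h9 : n - 1 + 1 = n := by have := Nat.pos_of_ne_zero (NeZero.ne n); omega
          have h6 := Function.iterate_succ_apply' K.ρ (n-1) j
          rw [← h6, Nat.succ_eq_add_one, h9, K.rho_n]
        conv_lhs => rw [← h8]
        rw [K.hτρ]
      have := K.mem_bnd.mp (hij ▸ ht₀)
      rw [hτj, hconst (n-1) (le_refl _)] at this
      exact this rfl
    · have e1 : s i' = s j := by rw [← hmi]; exact hconst m (by omega)
      have e2 : s (K.τ i') = s j := by
        have h3 : K.ρ^[m - 1] j = K.τ i' := by
          have := K.hdit j (K.τ i')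
          rwa [K.dd_tau (by intro he; rw [hmdef, ← he, K.dd_self] at hpos; omega)] at this
        rw [← h3]; exact hconst (m-1) (by omega)
      exact (K.mem_bnd.mp ht₀) (e1.trans e2.symm)
  set i := K.ρ^[t₀+1] j with hidef
  have hdd : K.dd j i = t₀ + 1 := (K.hdun j i (t₀+1) ht₀n rfl).symm
  have hji : j ≠ i := by
    intro he
    rw [← he, K.dd_self] at hdd
    omega
  have hCC : K.CC s j (K.τ i) := by
    intro u hu
    rw [K.dd_tau hji, hdd] at hu
    exact K.run_const hnb u (by omega)
  refine ⟨i, ⟨ht₀, hji, hCC⟩, ?_⟩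
  rintro i' ⟨hi', hji', hCC'⟩
  rcases lt_trichotomy (K.dd j i') (K.dd j i) with h | h | h
  · exact absurd (K.next_unique_aux hi' hji' hCC hji h) id
  · have e1 : K.ρ^[K.dd j i'] j = i' := K.hdit j i'
    rw [h, hdd] at e1
    exact e1.symm
  · exact absurd (K.next_unique_aux ht₀ hji hCC' hji' h) id

lemma sum_rr (hne : (K.bnd s).Nonempty) : ∑ i ∈ K.bnd s, K.rr s i = n := by
  have hrr : ∀ i, K.rr s i = ∑ j' : Fin n, if K.CC s i j' then 1 else 0 := by
    intro i
    rw [rr, Finset.card_filter]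
  calc ∑ i ∈ K.bnd s, K.rr s i
      = ∑ i ∈ K.bnd s, ∑ j' : Fin n, (if K.CC s i j' then 1 else 0) := by
        exact Finset.sum_congr rfl (fun i _ => hrr i)
    _ = ∑ j' : Fin n, ∑ i ∈ K.bnd s, (if K.CC s i j' then 1 else 0) := Finset.sum_comm
    _ = ∑ _j' : Fin n, 1 := by
        refine Finset.sum_congr rfl (fun j' _ => ?_)
        obtain ⟨i₀, hi₀, huniq⟩ := K.exists_unique_last hne j'
        rw [← Finset.card_filter]
        rw [Finset.card_eq_one]
        refine ⟨i₀, ?_⟩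
        ext x
        simp only [mem_filter, Finset.mem_singleton]
        constructor
        · rintro ⟨hx1, hx2⟩; exact huniq x ⟨hx1, hx2⟩
        · rintro rfl; exact hi₀
    _ = n := by simp

lemma sum_gs (hne : (K.bnd s).Nonempty) : ∑ i ∈ K.bnd s, (K.GS s i).card = n := by
  have hgs : ∀ i, (K.GS s i).card = ∑ j : Fin n, if j ≠ i ∧ K.CC s j (K.τ i) then 1 else 0 := by
    intro i
    rw [GS, Finset.card_filter]
  calc ∑ i ∈ K.bnd s, (K.GS s i).card
      = ∑ i ∈ K.bnd s, ∑ j : Fin n, (if j ≠ i ∧ K.CC s j (K.τ i) then 1 else 0) := by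
        exact Finset.sum_congr rfl (fun i _ => hgs i)
    _ = ∑ j : Fin n, ∑ i ∈ K.bnd s, (if j ≠ i ∧ K.CC s j (K.τ i) then 1 else 0) :=
        Finset.sum_comm
    _ = ∑ _j : Fin n, 1 := by
        refine Finset.sum_congr rfl (fun j _ => ?_)
        obtain ⟨i₀, hi₀, huniq⟩ := K.exists_unique_next hne j
        rw [← Finset.card_filter, Finset.card_eq_one]
        refine ⟨i₀, ?_⟩
        ext x
        simp only [mem_filter, Finset.mem_singleton]
        constructor
        · rintro ⟨hx1, hx2⟩; exact huniq x ⟨hx1, hx2⟩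
        · rintro rfl; exact ⟨hi₀.1, hi₀.2⟩
    _ = n := by simp

/-- THE KEY INEQUALITY: flipping a uniformly chosen boundary increases the
potential by at least `1` in expectation. -/
lemma key (hne : (K.bnd s).Nonempty) :
    (K.bnd s).card * (K.pot s + 1) ≤
      ∑ i ∈ K.bnd s, K.pot (Function.update s i (!(s i))) := by
  have h7 : ∀ i ∈ K.bnd s,
      K.pot s + (K.GS s i).card + 1 ≤ K.pot (Function.update s i (!(s i))) + K.rr s i :=
    fun i hi => K.pot_update hi
  have hsum := Finset.sum_le_sum h7
  rw [Finset.sum_add_distrib, Finset.sum_add_distrib, Finset.sum_add_distrib] at hsum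
  rw [K.sum_gs hne, K.sum_rr hne, Finset.sum_const, Finset.sum_const] at hsum
  simp only [smul_eq_mul, mul_one] at hsum
  have : (K.bnd s).card * (K.pot s + 1) = (K.bnd s).card * K.pot s + (K.bnd s).card := by ring
  rw [this]
  omega

end Potential


end Cyc

end CGProof


open scoped ENNReal NNReal Classical
open Finset Function

namespace CGProof2

lemma tsum_pure {α : Type*} (a : α) (g : α → ℝ≥0∞) :
    ∑' b, (PMF.pure a) b * g b = g a := by
  simp only [PMF.pure_apply]
  rw [tsum_eq_single a (by intro b hb; simp [hb])]
  simp

lemma tsum_bind {α β : Type*} (p : PMF α) (q : α → PMF β) (g : β → ℝ≥0∞) :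
    ∑' b, (p.bind q) b * g b = ∑' a, p a * ∑' b, q a b * g b := by
  simp only [PMF.bind_apply]
  calc ∑' b, (∑' a, p a * q a b) * g b
      = ∑' b, ∑' a, p a * q a b * g b := by
        refine tsum_congr fun b => ?_
        exact ENNReal.tsum_mul_right.symm
    _ = ∑' a, ∑' b, p a * q a b * g b := ENNReal.tsum_comm
    _ = ∑' a, p a * ∑' b, q a b * g b := by
        refine tsum_congr fun a => ?_
        simp_rw [mul_assoc]
        exact ENNReal.tsum_mul_left

end CGProof2

open scoped ENNReal NNReal Classical
open Finset Function

namespace CGProof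

variable {n : ℕ} [NeZero n]

lemma isNash_iff_unsat (G : CircleGame n) (s : Fin n → Bool) :
    G.IsNash s ↔ G.unsat s = ∅ := by
  simp [CircleGame.IsNash, CircleGame.unsat, Finset.filter_eq_empty_iff]

/-- Expected one-step increase of the potential is at least 1 outside Nash equilibria. -/
lemma step_exp (K : Cyc n) (G : CircleGame n) (HU : ∀ s, G.unsat s = K.bnd s)
    (s : Fin n → Bool) :
    (K.pot s : ℝ≥0∞) + (if G.IsNash s then 0 else 1) ≤
      ∑' s', (G.stepPMF s) s' * (K.pot s' : ℝ≥0∞) := by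
  by_cases hN : G.IsNash s
  · have hemp : ¬ (G.unsat s).Nonempty := by
      rw [isNash_iff_unsat] at hN
      simp [hN]
    rw [CircleGame.stepPMF, dif_neg hemp, CGProof2.tsum_pure]
    simp [hN]
  · have hne : (G.unsat s).Nonempty := by
      rw [Finset.nonempty_iff_ne_empty]
      intro h
      exact hN ((isNash_iff_unsat G s).mpr h)
    have hneb : (K.bnd s).Nonempty := by rwa [HU s] at hne
    rw [CircleGame.stepPMF, dif_pos hne, CGProof2.tsum_bind]
    have hpure : ∀ i : Fin n, ∑' s', (PMF.pure (Function.update s i (!(s i)))) s' *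
        (K.pot s' : ℝ≥0∞) = (K.pot (Function.update s i (!(s i))) : ℝ≥0∞) :=
      fun i => CGProof2.tsum_pure _ _
    calc (K.pot s : ℝ≥0∞) + (if G.IsNash s then 0 else 1)
        = (K.pot s : ℝ≥0∞) + 1 := by simp [hN]
      _ ≤ ∑' i : Fin n, (PMF.uniformOfFinset (G.unsat s) hne) i *
            (K.pot (Function.update s i (!(s i))) : ℝ≥0∞) := by
          rw [tsum_fintype]
          have hcz : ((K.bnd s).card : ℝ≥0∞) ≠ 0 := by
            simp [Finset.card_eq_zero, Finset.nonempty_iff_ne_empty.mp hneb]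
          have hct : ((K.bnd s).card : ℝ≥0∞) ≠ ⊤ := by simp
          have h1 : ∀ i : Fin n, (PMF.uniformOfFinset (G.unsat s) hne) i *
              (K.pot (Function.update s i (!(s i))) : ℝ≥0∞) =
              (if i ∈ K.bnd s then ((K.bnd s).card : ℝ≥0∞)⁻¹ *
                (K.pot (Function.update s i (!(s i))) : ℝ≥0∞) else 0) := by
            intro i
            rw [PMF.uniformOfFinset_apply]
            by_cases hi : i ∈ K.bnd s
            · simp [hi, HU s]
            · simp [hi, HU s]
          rw [Finset.sum_congr rfl (fun i _ => h1 i), Finset.sum_ite_mem,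
            Finset.univ_inter, ← Finset.mul_sum]
          have hkey := K.key hneb
          have hcast : ((K.bnd s).card : ℝ≥0∞) * ((K.pot s : ℝ≥0∞) + 1) ≤
              ∑ i ∈ K.bnd s, (K.pot (Function.update s i (!(s i))) : ℝ≥0∞) := by
            have := (Nat.cast_le (α := ℝ≥0∞)).mpr hkey
            push_cast at this
            convert this using 2 <;> push_cast <;> ring
          calc (K.pot s : ℝ≥0∞) + 1
              = ((K.bnd s).card : ℝ≥0∞)⁻¹ * (((K.bnd s).card : ℝ≥0∞) *
                  ((K.pot s : ℝ≥0∞) + 1)) := by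
                rw [← mul_assoc, ENNReal.inv_mul_cancel hcz hct, one_mul]
            _ ≤ ((K.bnd s).card : ℝ≥0∞)⁻¹ *
                  ∑ i ∈ K.bnd s, (K.pot (Function.update s i (!(s i))) : ℝ≥0∞) := by
                exact mul_le_mul_right hcast _
      _ = ∑' i : Fin n, (PMF.uniformOfFinset (G.unsat s) hne) i *
            ∑' s', (PMF.pure (Function.update s i (!(s i)))) s' * (K.pot s' : ℝ≥0∞) := by
          refine tsum_congr fun i => ?_
          rw [hpure i]

/-- The submartingale property of the potential along the walk. -/
lemma walk_exp (K : Cyc n) (G : CircleGame n) (HU : ∀ s, G.unsat s = K.bnd s)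
    (s₀ : Fin n → Bool) (t : ℕ) :
    (∑' s', (G.walk s₀ t) s' * (K.pot s' : ℝ≥0∞)) +
      (∑ s' ∈ Finset.univ.filter (fun s' => ¬ G.IsNash s'), (G.walk s₀ t) s') ≤
      ∑' s', (G.walk s₀ (t+1)) s' * (K.pot s' : ℝ≥0∞) := by
  have hW : ∑' s', (G.walk s₀ (t+1)) s' * (K.pot s' : ℝ≥0∞) =
      ∑' s, (G.walk s₀ t) s * ∑' s', (G.stepPMF s) s' * (K.pot s' : ℝ≥0∞) := by
    rw [CircleGame.walk, CGProof2.tsum_bind]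
  rw [hW]
  have hstep : ∀ s, (G.walk s₀ t) s * ((K.pot s : ℝ≥0∞) + (if G.IsNash s then 0 else 1)) ≤
      (G.walk s₀ t) s * ∑' s', (G.stepPMF s) s' * (K.pot s' : ℝ≥0∞) :=
    fun s => mul_le_mul_right (step_exp K G HU s) _
  refine le_trans ?_ (ENNReal.tsum_le_tsum hstep)
  have hsplit : ∀ s, (G.walk s₀ t) s * ((K.pot s : ℝ≥0∞) + (if G.IsNash s then 0 else 1)) =
      (G.walk s₀ t) s * (K.pot s : ℝ≥0∞) +
        (G.walk s₀ t) s * (if G.IsNash s then 0 else 1) := fun s => mul_add _ _ _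
  rw [tsum_congr hsplit, ENNReal.tsum_add]
  refine add_le_add_right ?_ _
  rw [tsum_fintype]
  rw [Finset.sum_filter]
  apply Finset.sum_le_sum
  intro s _
  by_cases h : G.IsNash s <;> simp [h]

lemma walk_pot_le (K : Cyc n) (G : CircleGame n) (s₀ : Fin n → Bool) (t : ℕ) :
    ∑' s', (G.walk s₀ t) s' * (K.pot s' : ℝ≥0∞) ≤ ((n : ℝ≥0∞) * n) := by
  calc ∑' s', (G.walk s₀ t) s' * (K.pot s' : ℝ≥0∞)
      ≤ ∑' s', (G.walk s₀ t) s' * ((n : ℝ≥0∞) * n) := by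
        refine ENNReal.tsum_le_tsum fun s' => mul_le_mul_right ?_ _
        have := K.pot_le (s := s')
        calc (K.pot s' : ℝ≥0∞) ≤ ((n * n : ℕ) : ℝ≥0∞) := Nat.cast_le.mpr this
          _ = (n : ℝ≥0∞) * n := by push_cast; ring
    _ = (n : ℝ≥0∞) * n := by
        rw [ENNReal.tsum_mul_right, PMF.tsum_coe, one_mul]

lemma expTime_le (K : Cyc n) (G : CircleGame n) (HU : ∀ s, G.unsat s = K.bnd s)
    (s₀ : Fin n → Bool) : G.expTime s₀ ≤ (n : ℝ≥0∞) ^ 2 := by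
  have hpartial : ∀ T, (∑ t ∈ Finset.range T,
      ∑ s' ∈ Finset.univ.filter (fun s' => ¬ G.IsNash s'), (G.walk s₀ t) s') +
      (∑' s', (G.walk s₀ 0) s' * (K.pot s' : ℝ≥0∞)) ≤
      ∑' s', (G.walk s₀ T) s' * (K.pot s' : ℝ≥0∞) := by
    intro T
    induction T with
    | zero => simp
    | succ T ih =>
      rw [Finset.sum_range_succ]
      calc ∑ t ∈ Finset.range T, _ + _ + _
          = (∑ t ∈ Finset.range T,
              ∑ s' ∈ Finset.univ.filter (fun s' => ¬ G.IsNash s'), (G.walk s₀ t) s') +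
            (∑' s', (G.walk s₀ 0) s' * (K.pot s' : ℝ≥0∞)) +
            (∑ s' ∈ Finset.univ.filter (fun s' => ¬ G.IsNash s'), (G.walk s₀ T) s') := by
              ring
        _ ≤ (∑' s', (G.walk s₀ T) s' * (K.pot s' : ℝ≥0∞)) +
            (∑ s' ∈ Finset.univ.filter (fun s' => ¬ G.IsNash s'), (G.walk s₀ T) s') :=
              add_le_add_left ih _
        _ ≤ ∑' s', (G.walk s₀ (T+1)) s' * (K.pot s' : ℝ≥0∞) := walk_exp K G HU s₀ T
  have hbound : ∀ T, (∑ t ∈ Finset.range T,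
      ∑ s' ∈ Finset.univ.filter (fun s' => ¬ G.IsNash s'), (G.walk s₀ t) s') ≤
      (n : ℝ≥0∞) * n := by
    intro T
    refine le_trans (le_trans le_self_add (hpartial T)) ?_
    exact walk_pot_le K G s₀ T
  rw [CircleGame.expTime, ENNReal.tsum_eq_iSup_nat]
  have : (n : ℝ≥0∞) * n = (n : ℝ≥0∞) ^ 2 := by ring
  rw [← this]
  exact iSup_le hbound

end CGProof

open scoped ENNReal NNReal Classical
open Finset Function

namespace CGProof

variable {n : ℕ} [NeZero n]

open scoped Fin.NatCast Fin.CommRing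

lemma it_add_one (t : ℕ) (j : Fin n) :
    (fun x : Fin n => x + 1)^[t] j = j + (t : Fin n) := by
  induction t with
  | zero => simp
  | succ v ih => rw [Function.iterate_succ_apply', ih, Nat.cast_add_one, add_assoc]

lemma it_sub_one (t : ℕ) (j : Fin n) :
    (fun x : Fin n => x - 1)^[t] j = j - (t : Fin n) := by
  induction t with
  | zero => simp
  | succ v ih =>
    rw [Function.iterate_succ_apply', ih, Nat.cast_add_one, sub_sub]

lemma natCast_fin_inj {t₁ t₂ : ℕ} (h1 : t₁ < n) (h2 : t₂ < n)
    (h : (t₁ : Fin n) = (t₂ : Fin n)) : t₁ = t₂ := by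
  have e1 : ((t₁ : Fin n) : ℕ) = t₁ := Fin.val_cast_of_lt h1
  have e2 : ((t₂ : Fin n) : ℕ) = t₂ := Fin.val_cast_of_lt h2
  rw [← e1, ← e2, h]

/-- The forward-shift cycle structure (used for type-3 games). -/
def cycAdd (n : ℕ) [NeZero n] : Cyc n where
  ρ := fun j => j + 1
  τ := fun j => j - 1
  hτρ := fun j => add_sub_cancel_right j 1
  hρτ := fun j => sub_add_cancel j 1
  dd := fun j i => (i - j).val
  hdlt := fun j i => (i - j).isLt
  hdit := fun j i => by
    rw [it_add_one, Fin.cast_val_eq_self, add_sub_cancel]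
  hdun := fun j i t ht he => by
    rw [it_add_one] at he
    have h3 : (t : Fin n) = i - j := by
      rw [← he]; ring
    apply natCast_fin_inj ht (i - j).isLt
    rw [h3, Fin.cast_val_eq_self]

/-- The backward-shift cycle structure (used for type-3' games). -/
def cycSub (n : ℕ) [NeZero n] : Cyc n where
  ρ := fun j => j - 1
  τ := fun j => j + 1
  hτρ := fun j => sub_add_cancel j 1
  hρτ := fun j => add_sub_cancel_right j 1
  dd := fun j i => (j - i).val
  hdlt := fun j i => (j - i).isLt
  hdit := fun j i => by
    rw [it_sub_one, Fin.cast_val_eq_self, sub_sub_cancel]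
  hdun := fun j i t ht he => by
    rw [it_sub_one] at he
    have h3 : (t : Fin n) = j - i := by
      have := sub_sub_cancel j (t : Fin n)
      rw [he] at this
      rw [← this]
    apply natCast_fin_inj ht (j - i).isLt
    rw [h3, Fin.cast_val_eq_self]

lemma notBR3 {G : CircleGame n} {i : Fin n} (h : G.IsType3 i) (s : Fin n → Bool) :
    ¬ G.CurrentBR s i ↔ s i ≠ s (i - 1) := by
  obtain ⟨ha, hb, hc⟩ := h
  have hii : (i + 1) - 1 = i := add_sub_cancel_right i 1
  cases hsi : s i <;> cases hsp : s (i - 1) <;> cases hsn : s (i + 1) <;>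
    simp [CircleGame.CurrentBR, CircleGame.cong, hii, hsi, hsp, hsn] <;> omega

lemma notBR3' {G : CircleGame n} {i : Fin n} (h : G.IsType3' i) (s : Fin n → Bool) :
    ¬ G.CurrentBR s i ↔ s i ≠ s (i + 1) := by
  obtain ⟨ha, hb, hc⟩ := h
  have hii : (i + 1) - 1 = i := add_sub_cancel_right i 1
  cases hsi : s i <;> cases hsp : s (i - 1) <;> cases hsn : s (i + 1) <;>
    simp [CircleGame.CurrentBR, CircleGame.cong, hii, hsi, hsp, hsn] <;> omega

lemma unsat3 {G : CircleGame n} (h : ∀ i, G.IsType3 i) (s : Fin n → Bool) :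
    G.unsat s = (cycAdd n).bnd s := by
  ext i
  simp only [CircleGame.unsat, Cyc.bnd, cycAdd, Finset.mem_filter, Finset.mem_univ, true_and]
  rw [notBR3 (h i) s]
  exact (Cyc.mem_bnd (cycAdd n)).symm

lemma unsat3' {G : CircleGame n} (h : ∀ i, G.IsType3' i) (s : Fin n → Bool) :
    G.unsat s = (cycSub n).bnd s := by
  ext i
  simp only [CircleGame.unsat, Cyc.bnd, cycSub, Finset.mem_filter, Finset.mem_univ, true_and]
  rw [notBR3' (h i) s]
  exact (Cyc.mem_bnd (cycSub n)).symm

end CGProof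


/-- There is a constant `C > 0` such that for every circle game with `n`
players in which all players are of type 3 (or all are of type 3') and every initial
state, the expected number of steps until the random best response dynamics reaches a
Nash equilibrium is at most `C·n^2`. -/
theorem circle_type3_random_dynamics_upper_bound :
    ∃ C : ℕ, 0 < C ∧
      ∀ (n : ℕ) [NeZero n] (G : CircleGame n),
        ((∀ i, G.IsType3 i) ∨ (∀ i, G.IsType3' i)) →
        ∀ s : Fin n → Bool,
          G.expTime s ≤ (C : ℝ≥0∞) * (n : ℝ≥0∞) ^ 2 := by
  refine ⟨1, one_pos, ?_⟩
  intro n _ G hG s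
  rw [Nat.cast_one, one_mul]
  rcases hG with h3 | h3'
  · exact CGProof.expTime_le (CGProof.cycAdd n) G (CGProof.unsat3 h3) s
  · exact CGProof.expTime_le (CGProof.cycSub n) G (CGProof.unsat3' h3') s
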